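/- Let n be a positive integer with n ≡ 2 (mod 4), let q = 3ⁿ, and let F_q be a finite field with q elements. Then there exists λ ∈ F_q with λ ≠ 0, λ ≠ 1 such that the Legendre elliptic curve E_λ : y² = x(x−1)(x−λ) satisfies #E_λ(F_q) = q + 1 + 2·3^{n/2}; that is, E_λ attains the Hasse–Weil upper bound for elliptic curves over F_q. -/

import Mathlib

open Polynomial

private lemma cardHom {A B : Type*} [AddGroup A] [AddGroup B] (f : A →+ B) :
    Nat.card A = Nat.card f.range * Nat.card f.ker := by
  rw [AddSubgroup.card_eq_card_quotient_mul_card_addSubgroup f.ker]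
  congr 1
  exact Nat.card_congr (QuotientAddGroup.quotientKerEquivRange f).toEquiv

private lemma card_le_roots {F : Type*} [Field F] [DecidableEq F] (Q : ℕ) (hQ : 1 < Q) (u : F) :
    Nat.card {x : F // x ^ Q = u * x} ≤ Q := by
  set pol : F[X] := X ^ Q - C u * X with hpol
  have hco : pol.coeff Q = 1 := by
    simp [hpol, coeff_X_pow, coeff_C_mul, coeff_X, if_neg (by omega : ¬ Q = 1),
      if_neg (by omega : ¬ (1:ℕ) = Q)]
  have hpol0 : pol ≠ 0 := fun h => by simp [h] at hco
  have hdeg : pol.natDegree ≤ Q := by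
    refine le_trans (natDegree_sub_le _ _) ?_
    simp only [natDegree_X_pow, max_le_iff, le_refl, true_and]
    exact le_trans (natDegree_C_mul_le _ _) (by simpa using hQ.le)
  have hmem : ∀ x : F, x ^ Q = u * x → x ∈ pol.roots.toFinset := by
    intro x hx
    rw [Multiset.mem_toFinset, mem_roots hpol0]
    simp [IsRoot, hpol, hx]
  have hinj : Function.Injective
      (fun z : {x : F // x ^ Q = u * x} => (⟨z.1, hmem z.1 z.2⟩ : pol.roots.toFinset)) := by
    intro a b h
    have : (a : F) = b := by simpa [Subtype.ext_iff] using h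
    exact Subtype.ext this
  calc Nat.card {x : F // x ^ Q = u * x} ≤ Nat.card pol.roots.toFinset :=
        Nat.card_le_card_of_injective _ hinj
    _ = pol.roots.toFinset.card := by rw [Nat.card_eq_fintype_card]; exact Fintype.card_coe _
    _ ≤ Multiset.card pol.roots := Multiset.toFinset_card_le _
    _ ≤ pol.natDegree := card_roots' pol
    _ ≤ Q := hdeg

/-- For `q = 3ⁿ` with `n ≡ 2 (mod 4)`, some Legendre elliptic curve `E_λ : y² = x(x−1)(x−λ)`
with `λ ∈ F_q \ {0,1}` attains the Hasse–Weil upper bound: `#E_λ(F_q) = q + 1 + 2·3^{n/2}`. -/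
theorem legendre_max_char_three {F : Type*} [Field F] [Fintype F]
    (n : ℕ) (hn : 0 < n) (hn4 : n % 4 = 2) (hq : Fintype.card F = 3 ^ n) :
    ∃ lam : F, lam ≠ 0 ∧ lam ≠ 1 ∧
      1 + Nat.card {p : F × F // p.2 ^ 2 = p.1 * (p.1 - 1) * (p.1 - lam)} =
        3 ^ n + 1 + 2 * 3 ^ (n / 2) := by
  classical
  -- numeric setup
  set m := n / 2 with hm
  have hn2 : n = 2 * m := by omega
  set Q := 3 ^ m with hQdef
  have hm1 : 1 ≤ m := by omega
  obtain ⟨t, ht⟩ : ∃ t, m = t + 1 := ⟨m - 1, by omega⟩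
  have hQ1 : 1 < Q := Nat.one_lt_pow (by omega) (by norm_num)
  have hQ0 : Q ≠ 0 := by positivity
  have hQodd : Odd Q := Odd.pow ⟨1, by norm_num⟩
  have hQmod4 : Q % 4 = 3 := by
    obtain ⟨k, hk⟩ : ∃ k, m = 2 * k + 1 := ⟨m / 2, by omega⟩
    rw [hQdef, hk, pow_succ, pow_mul]
    rw [Nat.mul_mod, Nat.pow_mod]
    norm_num
  have hs2 : (Q + 1) / 2 * 2 = Q + 1 := by omega
  have hseven : Even ((Q + 1) / 2) := by
    refine ⟨(Q + 1) / 4, by omega⟩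
  -- characteristic
  have hp3 : Nat.Prime 3 := by norm_num
  haveI : Fact (Nat.Prime 3) := ⟨hp3⟩
  haveI hchar : CharP F 3 := by
    haveI := ringChar.charP F
    obtain ⟨k, hprime, hcard⟩ := FiniteField.card F (ringChar F)
    have hdvd : ringChar F ∣ 3 ^ n := by
      rw [← hq, hcard]
      exact dvd_pow_self _ (by positivity)
    have hrc : ringChar F = 3 :=
      (Nat.prime_dvd_prime_iff_eq hprime hp3).mp (hprime.dvd_of_dvd_pow hdvd)
    exact hrc ▸ ringChar.charP F
  have h3 : (3 : F) = 0 := by exact_mod_cast CharP.cast_eq_zero F 3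
  have h2ne : (2 : F) ≠ 0 := by
    intro h
    have := (CharP.cast_eq_zero_iff F 3 2).mp (by exact_mod_cast h)
    norm_num at this
  -- power helpers
  have hcardF : Fintype.card F = Q * Q := by rw [hq, hn2, two_mul, pow_add]
  have hQQ : ∀ x : F, (x ^ Q) ^ Q = x := by
    intro x
    rw [← pow_mul, ← hcardF]
    exact FiniteField.pow_card x
  haveI : ExpChar F 3 := ExpChar.prime hp3
  have hadd : ∀ x y : F, (x + y) ^ Q = x ^ Q + y ^ Q := by
    intro x y
    rw [hQdef]
    exact add_pow_char_pow ..
  have hneg : ∀ x : F, (-x) ^ Q = -x ^ Q := fun x => Odd.neg_pow hQodd x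
  have hsub : ∀ x y : F, (x - y) ^ Q = x ^ Q - y ^ Q := by
    intro x y
    rw [sub_eq_add_neg, hadd, hneg, sub_eq_add_neg]
  -- the additive maps
  obtain ⟨φ, hφ⟩ : ∃ f : F →+ F, ∀ x, f x = x ^ 3 - x :=
    ⟨{ toFun := fun x => x ^ 3 - x
       map_zero' := by norm_num
       map_add' := fun x y => by
         show (x + y) ^ 3 - (x + y) = (x ^ 3 - x) + (y ^ 3 - y)
         rw [add_pow_char]
         ring }, fun _ => rfl⟩
  obtain ⟨τ, hτ⟩ : ∃ f : F →+ F, ∀ x, f x = x + x ^ Q :=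
    ⟨{ toFun := fun x => x + x ^ Q
       map_zero' := by simp [zero_pow hQ0]
       map_add' := fun x y => by
         show (x + y) + (x + y) ^ Q = (x + x ^ Q) + (y + y ^ Q)
         rw [hadd]
         ring }, fun _ => rfl⟩
  obtain ⟨KA, hKA⟩ : ∃ K : AddSubgroup F, ∀ x, x ∈ K ↔ x ^ Q = x :=
    ⟨{ carrier := {x | x ^ Q = x}
       zero_mem' := by simp [zero_pow hQ0]
       add_mem' := fun {a b} ha hb => by
         simp only [Set.mem_setOf_eq] at *
         rw [hadd, ha, hb]
       neg_mem' := fun {a} ha => by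
         simp only [Set.mem_setOf_eq] at *
         rw [hneg, ha] }, fun _ => Iff.rfl⟩
  have hJ : ∀ x : F, x ∈ τ.ker ↔ x ^ Q = -x := by
    intro x
    rw [AddMonoidHom.mem_ker, hτ]
    constructor <;> intro h <;> linear_combination h
  -- cardinalities of KA and τ.ker
  have c1 : Nat.card F = Nat.card τ.range * Nat.card τ.ker := cardHom τ
  have hKAle : Nat.card KA ≤ Q := by
    refine le_trans (le_of_eq (Nat.card_congr (Equiv.subtypeEquivRight (q := fun x : F => x ^ Q = 1 * x) ?_))) (card_le_roots Q hQ1 1)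
    intro x
    show x ∈ KA ↔ x ^ Q = 1 * x
    rw [hKA, one_mul]
  have hJle : Nat.card τ.ker ≤ Q := by
    refine le_trans (le_of_eq (Nat.card_congr (Equiv.subtypeEquivRight (q := fun x : F => x ^ Q = (-1) * x) ?_))) (card_le_roots Q hQ1 (-1))
    intro x
    show x ∈ τ.ker ↔ x ^ Q = -1 * x
    rw [hJ, neg_one_mul]
  have hτKA : ∀ x : F, τ x ∈ KA := by
    intro x
    rw [hKA, hτ, hadd, hQQ]
    ring
  have hRKA : τ.range ≤ KA := by rintro _ ⟨x, rfl⟩; exact hτKA x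
  have hRle : Nat.card τ.range ≤ Nat.card KA := AddSubgroup.card_le_of_le hRKA
  have hcardF' : Nat.card F = Q * Q := by rw [Nat.card_eq_fintype_card, hcardF]
  have e1 : Q * Q = Nat.card τ.range * Nat.card τ.ker := by rw [← hcardF']; exact c1
  have hRQ : Nat.card τ.range = Q := by
    have h1 : Q * Q ≤ Nat.card τ.range * Q := by
      rw [e1]; exact Nat.mul_le_mul_left _ hJle
    have h2 : Q ≤ Nat.card τ.range := Nat.le_of_mul_le_mul_right h1 (by omega)
    exact le_antisymm (hRle.trans hKAle) h2
  have hJQ : Nat.card τ.ker = Q := by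
    have : Q * Q = Q * Nat.card τ.ker := by rw [e1, hRQ]
    exact (Nat.eq_of_mul_eq_mul_left (by omega) this).symm
  have hKAQ : Nat.card KA = Q := le_antisymm hKAle (hRQ ▸ hRle)
  have hRKAeq : τ.range = KA := AddSubgroup.eq_of_le_of_card_ge hRKA (by rw [hRQ, hKAQ])
  -- kernel of φ
  have hker : ∀ x : F, x ^ 3 - x = 0 ↔ (x = 0 ∨ x = 1 ∨ x = -1) := by
    intro x
    constructor
    · intro h
      have h' : x * (x - 1) * (x + 1) = 0 := by linear_combination h
      rcases mul_eq_zero.mp h' with h'' | h''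
      · rcases mul_eq_zero.mp h'' with h3' | h3'
        · exact Or.inl h3'
        · exact Or.inr (Or.inl (by linear_combination h3'))
      · exact Or.inr (Or.inr (by linear_combination h''))
    · rintro (rfl | rfl | rfl) <;> ring
  have h01 : (0 : F) ≠ 1 := zero_ne_one
  have h0m1 : (0 : F) ≠ -1 := by
    intro h
    have : (1 : F) = 0 := by linear_combination h
    exact one_ne_zero this
  have h1m1 : (1 : F) ≠ -1 := by
    intro h
    have : (2 : F) = 0 := by linear_combination h
    exact h2ne this
  have hkcard : Nat.card φ.ker = 3 := by
    have hcongr : Nat.card φ.ker = Nat.card ({0, 1, -1} : Set F) := by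
      refine Nat.card_congr (Equiv.subtypeEquivRight ?_)
      intro x
      rw [AddMonoidHom.mem_ker, hφ, hker]
      simp [Set.mem_insert_iff]
    rw [hcongr, Nat.card_coe_set_eq]
    exact Set.ncard_eq_three.mpr ⟨0, 1, -1, h01, h0m1, h1m1, rfl⟩
  have c2 : Nat.card F = Nat.card φ.range * Nat.card φ.ker := cardHom φ
  have hRφ : Nat.card φ.range = 3 ^ (t + m) := by
    have : Q * Q = Nat.card φ.range * 3 := by rw [← hcardF', c2, hkcard]
    have h33 : Q * Q = 3 ^ (t + m) * 3 := by
      rw [hQdef, ← pow_add]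
      have : m + m = (t + m) + 1 := by omega
      rw [this, pow_succ]
    omega
  -- the subgroup P = φ(KA)
  set ψ : KA →+ F := φ.comp KA.subtype with hψdef
  have hψ : ∀ k : KA, ψ k = (k : F) ^ 3 - (k : F) := fun k => hφ _
  have c3 : Nat.card KA = Nat.card ψ.range * Nat.card ψ.ker := cardHom ψ
  have hmemKA01 : (0 : F) ∈ KA ∧ (1 : F) ∈ KA ∧ (-1 : F) ∈ KA := by
    refine ⟨?_, ?_, ?_⟩ <;> rw [hKA]
    · exact zero_pow hQ0
    · exact one_pow Q
    · rw [hneg, one_pow]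
  have hkerψ : Nat.card ψ.ker = 3 := by
    have hbij : Nat.card ({0, 1, -1} : Set F) = Nat.card ψ.ker := by
      refine Nat.card_eq_of_bijective (fun x => ⟨⟨x.1, ?_⟩, ?_⟩) ⟨?_, ?_⟩
      · rcases x.2 with h | h | h
        · rw [h]; exact hmemKA01.1
        · rw [h]; exact hmemKA01.2.1
        · rw [Set.mem_singleton_iff.mp h]; exact hmemKA01.2.2
      · rw [AddMonoidHom.mem_ker, hψ]
        rcases x.2 with h | h | h
        · rw [h]; ring
        · rw [h]; ring
        · rw [Set.mem_singleton_iff.mp h]; ring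
      · intro a b h
        replace h := congrArg Subtype.val h
        replace h := congrArg Subtype.val h
        exact Subtype.ext h
      · intro z
        have hz : (z : KA) ∈ ψ.ker := z.2
        rw [AddMonoidHom.mem_ker, hψ] at hz
        have := (hker _).mp hz
        refine ⟨⟨((z : KA) : F), by simpa [Set.mem_insert_iff] using this⟩, ?_⟩
        exact Subtype.ext (Subtype.ext rfl)
    have : Nat.card ({0, 1, -1} : Set F) = 3 := by
      rw [Nat.card_coe_set_eq]
      exact Set.ncard_eq_three.mpr ⟨0, 1, -1, h01, h0m1, h1m1, rfl⟩
    omega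
  set P : AddSubgroup F := ψ.range with hPdef
  have hPmem : ∀ c : F, c ∈ P ↔ ∃ x : F, x ∈ KA ∧ x ^ 3 - x = c := by
    intro c
    constructor
    · rintro ⟨k, rfl⟩; exact ⟨(k : F), k.2, (hψ k).symm⟩
    · rintro ⟨x, hx, hc⟩; exact ⟨⟨x, hx⟩, by rw [hψ]; exact hc⟩
  have hPQ : Nat.card P = 3 ^ t := by
    have : Q = Nat.card P * 3 := by rw [← hKAQ, c3, hkerψ]
    have h33 : Q = 3 ^ t * 3 := by rw [hQdef, ht, pow_succ]
    omega
  have hPKA : P ≤ KA := by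
    intro c hc
    obtain ⟨x, hx, rfl⟩ := (hPmem c).mp hc
    rw [hKA] at hx ⊢
    rw [hsub, pow_right_comm, hx]
  -- range φ = comap τ P
  set T : AddSubgroup F := P.comap τ with hTdef
  have hle : φ.range ≤ T := by
    rintro _ ⟨x, rfl⟩
    have : τ (φ x) ∈ P := by
      rw [hPmem]
      refine ⟨τ x, hτKA x, ?_⟩
      rw [hτ, hφ, hτ, hsub, pow_right_comm]
      linear_combination (x ^ 2 * x ^ Q + x * (x ^ Q) ^ 2) * h3
    exact this
  obtain ⟨ρ, hρ⟩ : ∃ ρ : T →+ P, ∀ z : T, (ρ z : F) = τ z :=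
    ⟨(τ.comp T.subtype).codRestrict P (fun z => z.2), fun z => rfl⟩
  have c4 : Nat.card T = Nat.card ρ.range * Nat.card ρ.ker := cardHom ρ
  have hρrange : Nat.card ρ.range = Nat.card P := by
    have hsurj : Function.Surjective ρ := by
      intro p
      have hpKA : (p : F) ∈ KA := hPKA p.2
      rw [← hRKAeq] at hpKA
      obtain ⟨x, hx⟩ := hpKA
      have hxT : x ∈ T := by
        have : τ x ∈ P := by rw [hx]; exact p.2
        exact this
      exact ⟨⟨x, hxT⟩, Subtype.ext (by rw [hρ]; exact hx)⟩
    rw [AddMonoidHom.range_eq_top_of_surjective ρ hsurj]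
    exact AddSubgroup.card_top
  have hρker : Nat.card ρ.ker = Nat.card τ.ker := by
    refine Nat.card_eq_of_bijective (fun z => ⟨(z.1 : F), ?_⟩) ⟨?_, ?_⟩
    · have : (ρ z.1 : F) = 0 := by
        rw [AddMonoidHom.mem_ker.mp z.2]
        rfl
      rw [hρ] at this
      exact AddMonoidHom.mem_ker.mpr this
    · intro a b h
      replace h := congrArg Subtype.val h
      exact Subtype.ext (Subtype.ext h)
    · intro x
      have hxT : (x : F) ∈ T := by
        have : τ (x : F) ∈ P := by
          rw [AddMonoidHom.mem_ker.mp x.2]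
          exact zero_mem P
        exact this
      refine ⟨⟨⟨(x : F), hxT⟩, ?_⟩, Subtype.ext rfl⟩
      rw [AddMonoidHom.mem_ker]
      refine Subtype.ext ?_
      rw [hρ]
      exact AddMonoidHom.mem_ker.mp x.2
  have hTcard : Nat.card T = 3 ^ (t + m) := by
    rw [c4, hρrange, hρker, hPQ, hJQ, hQdef, ← pow_add]
  have hRφT : φ.range = T := by
    refine AddSubgroup.eq_of_le_of_card_ge hle ?_
    rw [hTcard, hRφ]
  -- get γ and e
  obtain ⟨γ, hγQ, hγ0⟩ : ∃ γ : F, γ ^ Q = -γ ∧ γ ≠ 0 := by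
    by_contra hcon
    push_neg at hcon
    have hbot : τ.ker = ⊥ := by
      refine (AddSubgroup.eq_bot_iff_forall _).mpr fun x hx => ?_
      exact hcon x ((hJ x).mp hx)
    rw [hbot, AddSubgroup.card_bot] at hJQ
    omega
  set e : F := γ ^ ((Q + 1) / 2) with hedef
  have heQ : e ^ Q = e := by
    rw [hedef, ← pow_mul, mul_comm, pow_mul, hγQ]
    exact Even.neg_pow hseven γ
  have he2 : e ^ 2 = -(γ ^ 2) := by
    have h1 : e ^ 2 = γ ^ (Q + 1) := by rw [hedef, ← pow_mul, hs2]
    rw [h1, pow_succ, hγQ]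
    ring
  have he0 : e ≠ 0 := pow_ne_zero _ hγ0
  -- fiber counting
  have hfiber : ∀ c : F, Nat.card {x : F // x ^ 3 - x = c} = if c ∈ φ.range then 3 else 0 := by
    intro c
    by_cases hc : c ∈ φ.range
    · rw [if_pos hc]
      obtain ⟨x₀, hx₀⟩ := hc
      rw [hφ] at hx₀
      have hset : ∀ x : F, (x ^ 3 - x = c) ↔ (x = x₀ ∨ x = x₀ + 1 ∨ x = x₀ - 1) := by
        intro x
        constructor
        · intro h
          have key : (x - x₀) * ((x - x₀) - 1) * ((x - x₀) + 1) = 0 := by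
            linear_combination h - hx₀ + (x * x₀ ^ 2 - x ^ 2 * x₀) * h3
          rcases mul_eq_zero.mp key with h' | h'
          · rcases mul_eq_zero.mp h' with h'' | h''
            · exact Or.inl (by linear_combination h'')
            · exact Or.inr (Or.inl (by linear_combination h''))
          · exact Or.inr (Or.inr (by linear_combination h'))
        · rintro (rfl | rfl | rfl)
          · exact hx₀
          · linear_combination hx₀ + (x₀ ^ 2 + x₀) * h3
          · linear_combination hx₀ + (x₀ - x₀ ^ 2) * h3
      rw [Nat.card_congr (Equiv.subtypeEquivRight hset)]
      have hcongr : Nat.card {x : F // x = x₀ ∨ x = x₀ + 1 ∨ x = x₀ - 1}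
          = Nat.card ({x₀, x₀ + 1, x₀ - 1} : Set F) := by
        refine Nat.card_congr (Equiv.subtypeEquivRight ?_)
        intro x; simp [Set.mem_insert_iff]
      rw [hcongr, Nat.card_coe_set_eq]
      refine Set.ncard_eq_three.mpr ⟨x₀, x₀ + 1, x₀ - 1, ?_, ?_, ?_, rfl⟩
      · intro h; exact one_ne_zero (by linear_combination -h)
      · intro h; exact one_ne_zero (by linear_combination h)
      · intro h; exact one_ne_zero (by linear_combination h3 - h)
    · rw [if_neg hc]
      haveI : IsEmpty {x : F // x ^ 3 - x = c} :=
        ⟨fun x => hc ⟨x.1, by rw [hφ]; exact x.2⟩⟩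
      exact Nat.card_of_isEmpty
  -- main count: N = 3 * M
  have e0 : {p : F × F // p.2 ^ 2 = p.1 ^ 3 - p.1} ≃ Σ y : F, {x : F // x ^ 3 - x = y ^ 2} :=
    { toFun := fun z => ⟨z.1.2, z.1.1, z.2.symm⟩
      invFun := fun s => ⟨(s.2.1, s.1), s.2.2.symm⟩
      left_inv := fun z => rfl
      right_inv := fun s => rfl }
  have hmain : Nat.card {p : F × F // p.2 ^ 2 = p.1 * (p.1 - 1) * (p.1 - (-1 : F))}
      = 3 * Nat.card {y : F // τ (y ^ 2) ∈ P} := by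
    have hpred : ∀ p : F × F,
        (p.2 ^ 2 = p.1 * (p.1 - 1) * (p.1 - (-1 : F))) ↔ p.2 ^ 2 = p.1 ^ 3 - p.1 := by
      intro p; constructor <;> intro h <;> linear_combination h
    calc Nat.card {p : F × F // p.2 ^ 2 = p.1 * (p.1 - 1) * (p.1 - (-1 : F))}
        = Nat.card {p : F × F // p.2 ^ 2 = p.1 ^ 3 - p.1} :=
          Nat.card_congr (Equiv.subtypeEquivRight hpred)
      _ = Fintype.card (Σ y : F, {x : F // x ^ 3 - x = y ^ 2}) := by
          rw [Nat.card_congr e0, Nat.card_eq_fintype_card]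
      _ = ∑ y : F, Fintype.card {x : F // x ^ 3 - x = y ^ 2} := Fintype.card_sigma
      _ = ∑ y : F, if y ^ 2 ∈ φ.range then 3 else 0 := by
          refine Finset.sum_congr rfl fun y _ => ?_
          rw [← Nat.card_eq_fintype_card, hfiber]
      _ = 3 * Nat.card {y : F // y ^ 2 ∈ φ.range} := by
          rw [Finset.sum_ite, Finset.sum_const, Finset.sum_const_zero, add_zero, smul_eq_mul,
            Nat.card_eq_fintype_card, Fintype.card_subtype]
          ring
      _ = 3 * Nat.card {y : F // τ (y ^ 2) ∈ P} := by
          congr 1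
          refine Nat.card_congr (Equiv.subtypeEquivRight fun y => ?_)
          rw [hRφT, hTdef, AddSubgroup.mem_comap]
  -- the chain of equivalences computing M
  have E1 : {y : F // τ (y ^ 2) ∈ P} ≃
      {w : KA × τ.ker // ((w.1 : F)) ^ 2 + ((w.2 : F)) ^ 2 ∈ P} :=
    { toFun := fun z =>
        ⟨(⟨-(z.1 + z.1 ^ Q), by rw [hKA, hneg, hadd, hQQ]; ring⟩,
          ⟨z.1 ^ Q - z.1, by rw [hJ, hsub, hQQ]; ring⟩), by
          have hid : (-((z : F) + (z : F) ^ Q)) ^ 2 + ((z : F) ^ Q - (z : F)) ^ 2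
              = -(τ ((z : F) ^ 2)) := by
            rw [hτ, pow_right_comm]
            linear_combination ((z : F) ^ 2 + ((z : F) ^ Q) ^ 2) * h3
          rw [hid]
          exact neg_mem z.2⟩
      invFun := fun w =>
        ⟨(w.1.1 : F) + (w.1.2 : F), by
          have ha := (hKA _).mp w.1.1.2
          have hb := (hJ _).mp w.1.2.2
          have hid : τ (((w.1.1 : F) + (w.1.2 : F)) ^ 2)
              = -(((w.1.1 : F)) ^ 2 + ((w.1.2 : F)) ^ 2) := by
            rw [hτ, pow_right_comm, hadd, ha, hb]
            linear_combination (((w.1.1 : F)) ^ 2 + ((w.1.2 : F)) ^ 2) * h3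
          rw [hid]
          exact neg_mem w.2⟩
      left_inv := fun z => Subtype.ext (by
        show -((z : F) + (z : F) ^ Q) + ((z : F) ^ Q - (z : F)) = (z : F)
        linear_combination (-(z : F)) * h3)
      right_inv := fun w => by
        obtain ⟨⟨⟨a, ha⟩, ⟨b, hb⟩⟩, hw⟩ := w
        rw [hKA] at ha
        have hb' := (hJ b).mp hb
        refine Subtype.ext (Prod.ext (Subtype.ext ?_) (Subtype.ext ?_))
        · show -((a + b) + (a + b) ^ Q) = a
          rw [hadd, ha, hb']
          linear_combination (-a) * h3
        · show (a + b) ^ Q - (a + b) = b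
          rw [hadd, ha, hb']
          linear_combination (-b) * h3 }
  have E2 : {w : KA × τ.ker // ((w.1 : F)) ^ 2 + ((w.2 : F)) ^ 2 ∈ P} ≃
      {w : KA × KA // ((w.1 : F)) ^ 2 + ((w.2 : F) * γ) ^ 2 ∈ P} :=
    { toFun := fun w =>
        ⟨(w.1.1, ⟨(w.1.2 : F) * γ⁻¹, by
          have hb := (hJ _).mp w.1.2.2
          rw [hKA, mul_pow, hb, inv_pow, hγQ]
          field_simp⟩), by
          have : (w.1.2 : F) * γ⁻¹ * γ = (w.1.2 : F) := by field_simp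
          show ((w.1.1 : F)) ^ 2 + ((w.1.2 : F) * γ⁻¹ * γ) ^ 2 ∈ P
          rw [this]
          exact w.2⟩
      invFun := fun w =>
        ⟨(w.1.1, ⟨(w.1.2 : F) * γ, by
          have hk := (hKA _).mp w.1.2.2
          rw [hJ, mul_pow, hk, hγQ]
          ring⟩), w.2⟩
      left_inv := fun w => by
        refine Subtype.ext (Prod.ext rfl (Subtype.ext ?_))
        show (w.1.2 : F) * γ⁻¹ * γ = (w.1.2 : F)
        field_simp
      right_inv := fun w => by
        refine Subtype.ext (Prod.ext rfl (Subtype.ext ?_))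
        show (w.1.2 : F) * γ * γ⁻¹ = (w.1.2 : F)
        field_simp }
  have hγ2 : γ ^ 2 = -(e ^ 2) := by linear_combination he2
  have E3 : {w : KA × KA // ((w.1 : F)) ^ 2 + ((w.2 : F) * γ) ^ 2 ∈ P} ≃
      {w : KA × KA // (w.1 : F) * (w.2 : F) ∈ P} :=
    { toFun := fun w =>
        ⟨(⟨(w.1.1 : F) - e * (w.1.2 : F), by
            have ha := (hKA _).mp w.1.1.2
            have hk := (hKA _).mp w.1.2.2
            rw [hKA, hsub, mul_pow, heQ, ha, hk]⟩,
          ⟨(w.1.1 : F) + e * (w.1.2 : F), by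
            have ha := (hKA _).mp w.1.1.2
            have hk := (hKA _).mp w.1.2.2
            rw [hKA, hadd, mul_pow, heQ, ha, hk]⟩), by
          show ((w.1.1 : F) - e * (w.1.2 : F)) * ((w.1.1 : F) + e * (w.1.2 : F)) ∈ P
          have hid : ((w.1.1 : F) - e * (w.1.2 : F)) * ((w.1.1 : F) + e * (w.1.2 : F))
              = ((w.1.1 : F)) ^ 2 + ((w.1.2 : F) * γ) ^ 2 := by
            linear_combination (-((w.1.2 : F) ^ 2)) * he2
          rw [hid]
          exact w.2⟩
      invFun := fun w =>
        ⟨(⟨-((w.1.1 : F) + (w.1.2 : F)), by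
            have hu := (hKA _).mp w.1.1.2
            have hv := (hKA _).mp w.1.2.2
            rw [hKA, hneg, hadd, hu, hv]⟩,
          ⟨-(((w.1.2 : F) - (w.1.1 : F)) * e⁻¹), by
            have hu := (hKA _).mp w.1.1.2
            have hv := (hKA _).mp w.1.2.2
            rw [hKA, hneg, mul_pow, hsub, hu, hv, inv_pow, heQ]⟩), by
          show (-((w.1.1 : F) + (w.1.2 : F))) ^ 2
            + (-(((w.1.2 : F) - (w.1.1 : F)) * e⁻¹) * γ) ^ 2 ∈ P
          have hid : (-((w.1.1 : F) + (w.1.2 : F))) ^ 2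
              + (-(((w.1.2 : F) - (w.1.1 : F)) * e⁻¹) * γ) ^ 2
              = (w.1.1 : F) * (w.1.2 : F) := by
            have h1 : (-(((w.1.2 : F) - (w.1.1 : F)) * e⁻¹) * γ) ^ 2
                = ((w.1.2 : F) - (w.1.1 : F)) ^ 2 * (γ ^ 2) * (e ^ 2)⁻¹ := by
              ring
            rw [h1, hγ2]
            field_simp
            linear_combination ((w.1.1 : F) * (w.1.2 : F)) * h3
          rw [hid]
          exact w.2⟩
      left_inv := fun w => by
        refine Subtype.ext (Prod.ext (Subtype.ext ?_) (Subtype.ext ?_))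
        · show -(((w.1.1 : F) - e * (w.1.2 : F)) + ((w.1.1 : F) + e * (w.1.2 : F))) = (w.1.1 : F)
          linear_combination (-(w.1.1 : F)) * h3
        · show -(((((w.1.1 : F) + e * (w.1.2 : F))) - ((w.1.1 : F) - e * (w.1.2 : F))) * e⁻¹)
            = (w.1.2 : F)
          field_simp
          linear_combination (-((w.1.2 : F) * e)) * h3
      right_inv := fun w => by
        refine Subtype.ext (Prod.ext (Subtype.ext ?_) (Subtype.ext ?_))
        · show -((w.1.1 : F) + (w.1.2 : F)) - e * (-(((w.1.2 : F) - (w.1.1 : F)) * e⁻¹))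
            = (w.1.1 : F)
          field_simp
          linear_combination (-(w.1.1 : F)) * h3
        · show -((w.1.1 : F) + (w.1.2 : F)) + e * (-(((w.1.2 : F) - (w.1.1 : F)) * e⁻¹))
            = (w.1.2 : F)
          field_simp
          linear_combination (-(w.1.2 : F)) * h3 }
  have D : {w : KA × KA // (w.1 : F) * (w.2 : F) ∈ P} ≃
      (KA ⊕ ({u : KA // (u : F) ≠ 0} × P)) :=
    { toFun := fun w =>
        if h : (w.1.1 : F) = 0 then Sum.inl w.1.2
        else Sum.inr (⟨w.1.1, h⟩, ⟨(w.1.1 : F) * (w.1.2 : F), w.2⟩)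
      invFun := fun s =>
        match s with
        | Sum.inl v => ⟨((0 : KA), v), by simp [zero_mem]⟩
        | Sum.inr (u, p) =>
            ⟨(u.1, ⟨(u.1 : F)⁻¹ * (p : F), by
              have hu := (hKA _).mp u.1.2
              have hp := (hKA _).mp (hPKA p.2)
              rw [hKA, mul_pow, inv_pow, hu, hp]⟩), by
              show (u.1 : F) * ((u.1 : F)⁻¹ * (p : F)) ∈ P
              have hu0 : (u.1 : F) ≠ 0 := u.2
              rw [mul_inv_cancel_left₀ hu0]
              exact p.2⟩
      left_inv := fun w => by
        by_cases h : (w.1.1 : F) = 0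
        · simp only [dif_pos h]
          refine Subtype.ext (Prod.ext (Subtype.ext ?_) rfl)
          exact h.symm
        · simp only [dif_neg h]
          refine Subtype.ext (Prod.ext rfl (Subtype.ext ?_))
          show (w.1.1 : F)⁻¹ * ((w.1.1 : F) * (w.1.2 : F)) = (w.1.2 : F)
          exact inv_mul_cancel_left₀ h _
      right_inv := fun s => by
        match s with
        | Sum.inl v =>
          have h0 : (((0 : KA) : F)) = 0 := rfl
          simp only []
          rw [dif_pos h0]
        | Sum.inr (u, p) =>
          have hu : (u.1 : F) ≠ 0 := u.2
          simp only []
          rw [dif_neg hu]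
          congr 1
          refine Prod.ext (Subtype.ext rfl) (Subtype.ext ?_)
          show (u.1 : F) * ((u.1 : F)⁻¹ * (p : F)) = (p : F)
          exact mul_inv_cancel_left₀ hu _ }
  -- count via the chain
  set c : ℕ := Nat.card {u : KA // (u : F) ≠ 0} with hcdef
  have hM : Nat.card {y : F // τ (y ^ 2) ∈ P} = Q + c * 3 ^ t := by
    rw [Nat.card_congr (E1.trans (E2.trans (E3.trans D)))]
    rw [Nat.card_sum, Nat.card_prod, hKAQ, hPQ]
  have hc1 : 1 + c = Q := by
    have hsplit := Nat.card_congr (Equiv.sumCompl (fun u : KA => (u : F) = 0))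
    rw [Nat.card_sum] at hsplit
    have h1 : Nat.card {u : KA // (u : F) = 0} = 1 := by
      rw [Nat.card_eq_one_iff_unique]
      constructor
      · exact ⟨fun a b => Subtype.ext (Subtype.ext (a.2.trans b.2.symm))⟩
      · exact ⟨⟨0, rfl⟩⟩
    rw [h1, hKAQ] at hsplit
    exact hsplit
  -- assemble
  refine ⟨-1, neg_ne_zero.mpr one_ne_zero, ?_, ?_⟩
  · intro h
    exact h2ne (by linear_combination -h)
  · rw [hmain, hM]
    have hn' : (3 : ℕ) ^ n = Q * Q := by rw [hn2, two_mul, pow_add]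
    rw [hn']
    have h3R : 3 * 3 ^ t = Q := by rw [hQdef, ht, pow_succ]; ring
    calc 1 + 3 * (Q + c * 3 ^ t) = 1 + 3 * Q + c * (3 * 3 ^ t) := by ring
      _ = 1 + 3 * Q + c * Q := by rw [h3R]
      _ = Q * Q + 1 + 2 * Q := by
          rw [← hc1]; ring
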